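/- Let (X, T) be a topological dynamical system (X a compact metric space, T : X → X a homeomorphism), let d ∈ ℕ, and let p₁, …, p_d : ℤ → ℤ be arbitrary functions. The following are equivalent: (1) for all non-empty open sets U, V₁, …, V_d ⊆ X there exists n ∈ ℤ with U ∩ T^{−p₁(n)}V₁ ∩ ⋯ ∩ T^{−p_d(n)}V_d ≠ ∅; (2) there is a dense G_δ subset Y ⊆ X such that for every x ∈ Y the set {(T^{p₁(n)}x, …, T^{p_d(n)}x) : n ∈ ℤ} is dense in X^d. -/

import Mathlib

def Syndetic (S : Set ℤ) : Prop :=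
  ∃ L : ℕ, ∀ n : ℤ, ∃ m ∈ S, n ≤ m ∧ m ≤ n + L

def ThicklySyndetic (S : Set ℤ) : Prop :=
  ∀ L : ℕ, ∃ B : Set ℤ, Syndetic B ∧ ∀ b ∈ B, ∀ j : ℤ, 0 ≤ j → j ≤ (L : ℤ) → b + j ∈ S

def Thick (S : Set ℤ) : Prop :=
  ∀ L : ℕ, ∃ a : ℤ, ∀ j : ℤ, 0 ≤ j → j ≤ (L : ℤ) → a + j ∈ S

noncomputable def nint (a : ℝ) : ℤ := ⌊a + 1/2⌋

noncomputable def sfrac (a : ℝ) : ℝ := a - nint a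

theorem cont_zpow {X : Type*} [TopologicalSpace X] (T : X ≃ₜ X) (n : ℤ) :
    Continuous fun x => (T.toEquiv ^ n) x := by
  induction n using Int.induction_on with
  | zero => simpa using continuous_id' (X := X)
  | succ k ih =>
      have h : (fun x => (T.toEquiv ^ ((k : ℤ) + 1)) x) = fun x => (T.toEquiv ^ (k : ℤ)) (T x) := by
        funext x; rw [zpow_add_one, Equiv.Perm.mul_apply]; rfl
      rw [h]; exact ih.comp T.continuous
  | pred k ih =>
      have h : (fun x => (T.toEquiv ^ (-(k : ℤ) - 1)) x) = fun x => (T.toEquiv ^ (-(k : ℤ))) (T.symm x) := by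
        funext x; rw [zpow_sub_one, Equiv.Perm.mul_apply]; rfl
      rw [h]; exact ih.comp T.symm.continuous

open TopologicalSpace in
theorem equiv_dense_orbit {X : Type*} [MetricSpace X] [CompactSpace X]
    (T : X ≃ₜ X) (d : ℕ) (p : Fin d → ℤ → ℤ) :
    (∀ U : Set X, ∀ V : Fin d → Set X, IsOpen U → U.Nonempty →
        (∀ i, IsOpen (V i)) → (∀ i, (V i).Nonempty) →
        ∃ n : ℤ, (U ∩ ⋂ i, (fun x => (T.toEquiv ^ (p i n)) x) ⁻¹' V i).Nonempty)
    ↔ (∃ Y : Set X, Dense Y ∧ IsGδ Y ∧ ∀ x ∈ Y,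
        Dense {v : Fin d → X | ∃ n : ℤ, v = fun i => (T.toEquiv ^ (p i n)) x}) := by
  constructor
  · intro H
    set B := countableBasis X with hB
    have hbasis : IsTopologicalBasis B := isBasis_countableBasis X
    have hBc : B.Countable := countable_countableBasis X
    haveI : Countable B := hBc.to_subtype
    -- the family of open dense sets
    set A : (Fin d → B) → Set X :=
      fun g => ⋃ n : ℤ, ⋂ i, (fun x => (T.toEquiv ^ (p i n)) x) ⁻¹' (g i : Set X) with hA
    have hAopen : ∀ g, IsOpen (A g) := by
      intro g
      exact isOpen_iUnion fun n => isOpen_iInter_of_finite fun i =>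
        (isOpen_of_mem_countableBasis (g i).2).preimage (cont_zpow T (p i n))
    have hAdense : ∀ g, Dense (A g) := by
      intro g
      rw [dense_iff_inter_open]
      intro U hU hUne
      obtain ⟨n, x, hxU, hxI⟩ := H U (fun i => (g i : Set X)) hU hUne
        (fun i => isOpen_of_mem_countableBasis (g i).2)
        (fun i => nonempty_of_mem_countableBasis (g i).2)
      exact ⟨x, hxU, Set.mem_iUnion.mpr ⟨n, hxI⟩⟩
    refine ⟨⋂ g, A g, dense_iInter_of_isOpen hAopen hAdense,
      .iInter fun g => (hAopen g).isGδ, ?_⟩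
    intro x hx
    rw [dense_iff_inter_open]
    intro W hW hWne
    obtain ⟨v, hvW⟩ := hWne
    obtain ⟨I, u, hu, hsub⟩ := (isOpen_pi_iff.mp hW) v hvW
    -- build basis sets around v
    have : ∀ i : Fin d, ∃ t : B, v i ∈ (t : Set X) ∧
        (t : Set X) ⊆ (if i ∈ I then u i else Set.univ) := by
      intro i
      have hop : IsOpen (if i ∈ I then u i else Set.univ) := by
        split_ifs with h
        · exact (hu i h).1
        · exact isOpen_univ
      have hvm : v i ∈ (if i ∈ I then u i else Set.univ) := by
        split_ifs with h
        · exact (hu i h).2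
        · trivial
      obtain ⟨t, htB, hvt, hts⟩ := hbasis.exists_subset_of_mem_open hvm hop
      exact ⟨⟨t, htB⟩, hvt, hts⟩
    choose g hgv hgsub using this
    have hxA := Set.mem_iInter.mp hx g
    obtain ⟨n, hn⟩ := Set.mem_iUnion.mp hxA
    refine ⟨fun i => (T.toEquiv ^ (p i n)) x, ?_, ⟨n, rfl⟩⟩
    apply hsub
    intro i hi
    have := Set.mem_iInter.mp hn i
    have h2 := hgsub i this
    rw [if_pos (Finset.mem_coe.mp hi)] at h2; exact h2
  · rintro ⟨Y, hYd, _, hY⟩ U V hU hUne hV hVne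
    obtain ⟨x, hxY, hxU⟩ := hYd.exists_mem_open hU hUne
    have hpiO : IsOpen (Set.univ.pi V) := isOpen_set_pi Set.finite_univ (fun i _ => hV i)
    have hpiNe : (Set.univ.pi V).Nonempty := by
      rw [Set.univ_pi_nonempty_iff]; exact hVne
    obtain ⟨w, hwS, hwPi⟩ := (hY x hxY).exists_mem_open hpiO hpiNe
    obtain ⟨n, rfl⟩ := hwS
    refine ⟨n, x, hxU, Set.mem_iInter.mpr fun i => ?_⟩
    exact hwPi i (Set.mem_univ i)
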